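/- Residue property of the Izergin determinant: as z′ → z, K_{n+1}^{(l)}({x̄, z} | {ȳ, z′}) = f(z, z′)·f(z, ȳ)·f(x̄, z)·K_n^{(l)}(x̄ | ȳ) + (terms regular at z′ = z), where f(u,v) = (qu − q⁻¹v)/(u−v). Equivalently, the residue of K_{n+1}^{(l)}({x̄,z}|{ȳ,z′}) at z′ = z, as a function of z′, equals −z(q−q⁻¹)·f(z,ȳ)·f(x̄,z)·K_n^{(l)}(x̄|ȳ). -/

import Mathlib

open Finset

/-- The (trigonometric) Izergin determinant `K_k(x̄|ȳ)`. -/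
noncomputable def izK (q : ℂ) {ι : Type} [Fintype ι] [LinearOrder ι] [DecidableEq ι]
    (x y : ι → ℂ) : ℂ :=
  ((∏ i, ∏ j, (q * x i - q⁻¹ * y j)) /
      ((∏ i, ∏ j, if i < j then x i - x j else 1) *
        (∏ i, ∏ j, if i < j then y j - y i else 1))) *
    Matrix.det (Matrix.of fun i j => (q - q⁻¹) / ((x i - y j) * (q * x i - q⁻¹ * y j)))

/-- The left modified Izergin determinant `K^{(l)}`. -/
noncomputable def Kl (q : ℂ) {ι : Type} [Fintype ι] [LinearOrder ι] [DecidableEq ι]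
    (x y : ι → ℂ) : ℂ :=
  (∏ i, x i) * izK q x y

/-- The right modified Izergin determinant `K^{(r)}`. -/
noncomputable def Kr (q : ℂ) {ι : Type} [Fintype ι] [LinearOrder ι] [DecidableEq ι]
    (x y : ι → ℂ) : ℂ :=
  (∏ i, y i) * izK q x y

/-- The function `f(u,v) = (qu - q⁻¹v)/(u-v)`. -/
noncomputable def ff (q u v : ℂ) : ℂ := (q * u - q⁻¹ * v) / (u - v)

/-- The function `g(u,v) = (q - q⁻¹)/(u-v)`. -/
noncomputable def gg (q u v : ℂ) : ℂ := (q - q⁻¹) / (u - v)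

/-- The product `f(x̄,ȳ) = ∏_{i,j} f(x_i, y_j)`. -/
noncomputable def fS (q : ℂ) {ι κ : Type} [Fintype ι] [Fintype κ]
    (x : ι → ℂ) (y : κ → ℂ) : ℂ :=
  ∏ i, ∏ j, ff q (x i) (y j)

/-- The subfamily of `w` indexed (in increasing order) by a subset `S` of cardinality `k`. -/
noncomputable def part {N k : ℕ} (S : Finset (Fin N)) (h : S.card = k) (w : Fin N → ℂ) :
    Fin k → ℂ :=
  fun i => w (S.orderIsoOfFin h i).1

lemma card_compl_eq {N k m : ℕ} (hN : N = k + m) (S : Finset (Fin N)) (h : S.card = k) :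
    Sᶜ.card = m := by
  have hc := Finset.card_compl S
  simp only [Fintype.card_fin, h] at hc
  omega

/-- The left highest coefficient `Z^{(l)}_{a,b}(t̄;x̄|s̄;ȳ)`, given by the sum formula
over partitions of `w̄ = {s̄,x̄}` into `w̄_I ⊔ w̄_II` with `#w̄_I = b`. -/
noncomputable def Zl (q : ℂ) {a b : ℕ} (t x : Fin a → ℂ) (s y : Fin b → ℂ) : ℂ :=
  ((-q) ^ b)⁻¹ *
    ∑ S : Finset (Fin (b + a)),
      if h : S.card = b then
        Kr q s (fun i => q ^ 2 * part S h (Fin.append s x) i) *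
          Kl q (part Sᶜ (card_compl_eq rfl S h) (Fin.append s x)) t *
          Kl q y (part S h (Fin.append s x)) *
          fS q (part S h (Fin.append s x)) (part Sᶜ (card_compl_eq rfl S h) (Fin.append s x))
      else 0

/-- The right highest coefficient `Z^{(r)}_{a,b}(t̄;x̄|s̄;ȳ)`. -/
noncomputable def Zr (q : ℂ) {a b : ℕ} (t x : Fin a → ℂ) (s y : Fin b → ℂ) : ℂ :=
  (-q) ^ b *
    ∑ S : Finset (Fin (b + a)),
      if h : S.card = b then
        Kl q s (fun i => q ^ 2 * part S h (Fin.append s x) i) *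
          Kr q (part Sᶜ (card_compl_eq rfl S h) (Fin.append s x)) t *
          Kr q y (part S h (Fin.append s x)) *
          fS q (part S h (Fin.append s x)) (part Sᶜ (card_compl_eq rfl S h) (Fin.append s x))
      else 0


/-- `Fin.snoc` specialized to constant type family `ℂ`. -/
def snocC {n : ℕ} (x : Fin n → ℂ) (z : ℂ) : Fin (n+1) → ℂ := Fin.snoc x z

@[simp] lemma snocC_castSucc {n : ℕ} (x : Fin n → ℂ) (z : ℂ) (i : Fin n) :
    snocC x z (Fin.castSucc i) = x i := by simp [snocC]

@[simp] lemma snocC_last {n : ℕ} (x : Fin n → ℂ) (z : ℂ) :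
    snocC x z (Fin.last n) = z := by simp [snocC]

lemma snocC_ne_last_eq {n : ℕ} (y : Fin n → ℂ) (a b : ℂ) {j : Fin (n+1)} (hj : j ≠ Fin.last n) :
    snocC y a j = snocC y b j := by
  obtain ⟨j0, rfl⟩ := Fin.exists_castSucc_eq.mpr hj
  simp

lemma reshelper1 (a b c P : ℂ) (ha : a ≠ 0) (hb : b ≠ 0) :
    c * P = a * (P * b) * (c / (a * b)) := by
  field_simp

lemma reshelper2 (s a b c E : ℂ) (hb : b ≠ 0) :
    s * c * E / a = s * (b * E) * (c / (a * b)) := by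
  by_cases ha : a = 0
  · simp [ha]
  · field_simp

noncomputable def resM3 (q z : ℂ) {n : ℕ} (x y : Fin n → ℂ) (z' : ℂ) :
    Matrix (Fin (n+1)) (Fin (n+1)) ℂ :=
  Matrix.of fun i j =>
    if j = Fin.last n then
      if i = Fin.last n then (q - q⁻¹) * ∏ k, (q * x k - q⁻¹ * z')
      else (z - z') * (q - q⁻¹) * (∏ k ∈ Finset.univ.erase i, (q * snocC x z k - q⁻¹ * z')) /
        (snocC x z i - z')
    else (q - q⁻¹) /
      ((snocC x z i - snocC y z j) * (q * snocC x z i - q⁻¹ * snocC y z j))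

noncomputable def resG (q z : ℂ) {n : ℕ} (x y : Fin n → ℂ) (z' : ℂ) : ℂ :=
  -((∏ i, snocC x z i) *
    ((∏ i : Fin (n+1), ∏ j : Fin n, (q * snocC x z i - q⁻¹ * y j)) /
      ((∏ i, ∏ j, if i < j then snocC x z i - snocC x z j else 1) *
        (∏ i, ∏ j, if i < j then snocC y z' j - snocC y z' i else 1))) *
    (resM3 q z x y z').det)

lemma resM3_eq_update (q z : ℂ) {n : ℕ} (x y : Fin n → ℂ) (z' : ℂ) (hz' : z' ≠ z)
    (hqz : q * z - q⁻¹ * z' ≠ 0) (hqx : ∀ i, q * x i - q⁻¹ * z' ≠ 0) :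
    resM3 q z x y z' =
      (Matrix.of fun i j => (q - q⁻¹) /
          ((snocC x z i - snocC y z' j) *
            (q * snocC x z i - q⁻¹ * snocC y z' j))).updateCol (Fin.last n)
        (((z - z') * ∏ k : Fin (n+1), (q * snocC x z k - q⁻¹ * z')) •
          fun i => (q - q⁻¹) /
            ((snocC x z i - z') * (q * snocC x z i - q⁻¹ * z'))) := by
  ext i j
  by_cases hj : j = Fin.last n
  · subst hj
    rw [Matrix.updateCol_self]
    simp only [resM3, Matrix.of_apply, if_pos rfl, Pi.smul_apply, smul_eq_mul]
    by_cases hi : i = Fin.last n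
    · subst hi
      rw [if_pos rfl]
      have hc : (∏ k : Fin (n+1), (q * snocC x z k - q⁻¹ * z')) =
          (∏ k : Fin n, (q * x k - q⁻¹ * z')) * (q * z - q⁻¹ * z') := by
        rw [Fin.prod_univ_castSucc]
        simp
      rw [hc, snocC_last]
      have hzz : z - z' ≠ 0 := sub_ne_zero.mpr (fun h => hz' h.symm)
      exact reshelper1 _ _ _ _ hzz hqz
    · rw [if_neg hi]
      obtain ⟨i0, rfl⟩ := Fin.exists_castSucc_eq.mpr hi
      have hc : (∏ k : Fin (n+1), (q * snocC x z k - q⁻¹ * z')) =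
          (q * snocC x z (Fin.castSucc i0) - q⁻¹ * z') *
            ∏ k ∈ Finset.univ.erase (Fin.castSucc i0), (q * snocC x z k - q⁻¹ * z') :=
        (Finset.mul_prod_erase _ _ (Finset.mem_univ _)).symm
      rw [hc]
      simp only [snocC_castSucc]
      exact reshelper2 _ _ _ _ _ (hqx i0)
  · rw [Matrix.updateCol_ne hj]
    simp only [resM3, Matrix.of_apply, if_neg hj]
    rw [snocC_ne_last_eq y z z' hj]

lemma resG_eq {n : ℕ} (q z : ℂ) (x y : Fin n → ℂ) (z' : ℂ) (hz' : z' ≠ z)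
    (hqz : q * z - q⁻¹ * z' ≠ 0) (hqx : ∀ i, q * x i - q⁻¹ * z' ≠ 0) :
    resG q z x y z' = (z' - z) * Kl q (snocC x z) (snocC y z') := by
  have hNum : (∏ i : Fin (n+1), ∏ j : Fin (n+1), (q * snocC x z i - q⁻¹ * snocC y z' j)) =
      (∏ i : Fin (n+1), ∏ j : Fin n, (q * snocC x z i - q⁻¹ * y j)) *
        ∏ k : Fin (n+1), (q * snocC x z k - q⁻¹ * z') := by
    rw [← Finset.prod_mul_distrib]
    refine Finset.prod_congr rfl fun i _ => ?_
    rw [Fin.prod_univ_castSucc]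
    simp
  have hdet : (resM3 q z x y z').det =
      ((z - z') * ∏ k : Fin (n+1), (q * snocC x z k - q⁻¹ * z')) *
        (Matrix.of fun i j => (q - q⁻¹) /
          ((snocC x z i - snocC y z' j) * (q * snocC x z i - q⁻¹ * snocC y z' j))).det := by
    rw [resM3_eq_update q z x y z' hz' hqz hqx, Matrix.det_updateCol_smul]
    congr 1
    have hu : (fun i => (q - q⁻¹) / ((snocC x z i - z') * (q * snocC x z i - q⁻¹ * z'))) =
        fun i => (Matrix.of fun i j => (q - q⁻¹) /
          ((snocC x z i - snocC y z' j) *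
            (q * snocC x z i - q⁻¹ * snocC y z' j))) i (Fin.last n) := by
      funext i
      simp
    rw [hu, Matrix.updateCol_eq_self]
  simp only [resG, Kl, izK]
  rw [hNum, hdet]
  ring


lemma Dx_split (z : ℂ) {n : ℕ} (x : Fin n → ℂ) :
    (∏ i : Fin (n+1), ∏ j : Fin (n+1), if i < j then snocC x z i - snocC x z j else 1) =
      (∏ i, ∏ j, if i < j then x i - x j else 1) * ∏ i, (x i - z) := by
  rw [Fin.prod_univ_castSucc]
  have h1 : ∀ j : Fin (n+1),
      (if Fin.last n < j then snocC x z (Fin.last n) - snocC x z j else 1) = 1 :=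
    fun j => if_neg (not_lt.mpr (Fin.le_last j))
  rw [Finset.prod_congr rfl fun j _ => h1 j, Finset.prod_const_one, mul_one,
    ← Finset.prod_mul_distrib]
  refine Finset.prod_congr rfl fun i _ => ?_
  rw [Fin.prod_univ_castSucc]
  simp [Fin.castSucc_lt_castSucc_iff, Fin.castSucc_lt_last]

lemma Dy_split (w : ℂ) {n : ℕ} (y : Fin n → ℂ) :
    (∏ i : Fin (n+1), ∏ j : Fin (n+1), if i < j then snocC y w j - snocC y w i else 1) =
      (∏ i, ∏ j, if i < j then y j - y i else 1) * ∏ i, (w - y i) := by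
  rw [Fin.prod_univ_castSucc]
  have h1 : ∀ j : Fin (n+1),
      (if Fin.last n < j then snocC y w j - snocC y w (Fin.last n) else 1) = 1 :=
    fun j => if_neg (not_lt.mpr (Fin.le_last j))
  rw [Finset.prod_congr rfl fun j _ => h1 j, Finset.prod_const_one, mul_one,
    ← Finset.prod_mul_distrib]
  refine Finset.prod_congr rfl fun i _ => ?_
  rw [Fin.prod_univ_castSucc]
  simp [Fin.castSucc_lt_castSucc_iff, Fin.castSucc_lt_last]

lemma resM3_det_at (q z : ℂ) {n : ℕ} (x y : Fin n → ℂ) :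
    (resM3 q z x y z).det =
      ((q - q⁻¹) * ∏ k, (q * x k - q⁻¹ * z)) *
        (Matrix.of fun i j : Fin n =>
          (q - q⁻¹) / ((x i - y j) * (q * x i - q⁻¹ * y j))).det := by
  rw [Matrix.det_succ_column _ (Fin.last n)]
  rw [Finset.sum_eq_single (Fin.last n)]
  · have hsub : (resM3 q z x y z).submatrix (Fin.last n).succAbove (Fin.last n).succAbove =
        Matrix.of fun i j : Fin n =>
          (q - q⁻¹) / ((x i - y j) * (q * x i - q⁻¹ * y j)) := by
      ext i j
      simp [resM3, Fin.succAbove_last, (Fin.castSucc_lt_last j).ne]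
    rw [hsub]
    have hent : resM3 q z x y z (Fin.last n) (Fin.last n) =
        (q - q⁻¹) * ∏ k, (q * x k - q⁻¹ * z) := by
      simp [resM3]
    rw [hent]
    have hsgn : ((-1 : ℂ)) ^ ((Fin.last n : ℕ) + (Fin.last n : ℕ)) = 1 :=
      Even.neg_one_pow ⟨n, by simp⟩
    rw [hsgn, one_mul]
  · intro i _ hi
    have hent : resM3 q z x y z i (Fin.last n) = 0 := by
      simp [resM3, if_neg hi, sub_self]
    rw [hent, mul_zero, zero_mul]
  · intro h
    exact absurd (Finset.mem_univ _) h



lemma resG_at (q z : ℂ) {n : ℕ} (x y : Fin n → ℂ)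
    (hx : Function.Injective x) (hy : Function.Injective y)
    (hzx : ∀ i, z ≠ x i) (hzy : ∀ i, z ≠ y i) :
    resG q z x y z = -(z * (q - q⁻¹)) * fS q (fun _ : Fin 1 => z) y *
      fS q x (fun _ : Fin 1 => z) * Kl q x y := by
  have hBx : (∏ i, (x i - z)) ≠ 0 :=
    Finset.prod_ne_zero_iff.mpr fun i _ => sub_ne_zero.mpr fun e => hzx i e.symm
  have hBy : (∏ i, (z - y i)) ≠ 0 :=
    Finset.prod_ne_zero_iff.mpr fun i _ => sub_ne_zero.mpr (hzy i)
  have hDxn : (∏ i : Fin n, ∏ j, if i < j then x i - x j else 1) ≠ 0 :=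
    Finset.prod_ne_zero_iff.mpr fun i _ => Finset.prod_ne_zero_iff.mpr fun j _ => by
      split_ifs with h
      · exact sub_ne_zero.mpr fun e => h.ne (hx e)
      · exact one_ne_zero
  have hDyn : (∏ i : Fin n, ∏ j, if i < j then y j - y i else 1) ≠ 0 :=
    Finset.prod_ne_zero_iff.mpr fun i _ => Finset.prod_ne_zero_iff.mpr fun j _ => by
      split_ifs with h
      · exact sub_ne_zero.mpr fun e => h.ne' (hy e)
      · exact one_ne_zero
  have hP : (∏ i : Fin (n+1), snocC x z i) = (∏ i, x i) * z := by
    rw [Fin.prod_univ_castSucc]; simp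
  have hN : (∏ i : Fin (n+1), ∏ j : Fin n, (q * snocC x z i - q⁻¹ * y j)) =
      (∏ i, ∏ j, (q * x i - q⁻¹ * y j)) * ∏ j, (q * z - q⁻¹ * y j) := by
    rw [Fin.prod_univ_castSucc]; simp
  have hfz : fS q (fun _ : Fin 1 => z) y =
      (∏ j, (q * z - q⁻¹ * y j)) / ∏ j, (z - y j) := by
    simp [fS, ff, Finset.prod_div_distrib]
  have hfx : fS q x (fun _ : Fin 1 => z) =
      (∏ i, (q * x i - q⁻¹ * z)) / ∏ i, (x i - z) := by
    simp [fS, ff, Finset.prod_div_distrib]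
  simp only [resG, Kl, izK]
  rw [resM3_det_at, hP, hN, Dx_split, Dy_split, hfz, hfx]
  field_simp

lemma resG_cont (q z : ℂ) {n : ℕ} (x y : Fin n → ℂ)
    (hx : Function.Injective x) (hy : Function.Injective y)
    (hzx : ∀ i, z ≠ x i) (hzy : ∀ i, z ≠ y i) :
    ContinuousAt (resG q z x y) z := by
  have hBx : (∏ i, (x i - z)) ≠ 0 :=
    Finset.prod_ne_zero_iff.mpr fun i _ => sub_ne_zero.mpr fun e => hzx i e.symm
  have hBy : (∏ i, (z - y i)) ≠ 0 :=
    Finset.prod_ne_zero_iff.mpr fun i _ => sub_ne_zero.mpr (hzy i)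
  have hDxn : (∏ i : Fin n, ∏ j, if i < j then x i - x j else 1) ≠ 0 :=
    Finset.prod_ne_zero_iff.mpr fun i _ => Finset.prod_ne_zero_iff.mpr fun j _ => by
      split_ifs with h
      · exact sub_ne_zero.mpr fun e => h.ne (hx e)
      · exact one_ne_zero
  have hDyn : (∏ i : Fin n, ∏ j, if i < j then y j - y i else 1) ≠ 0 :=
    Finset.prod_ne_zero_iff.mpr fun i _ => Finset.prod_ne_zero_iff.mpr fun j _ => by
      split_ifs with h
      · exact sub_ne_zero.mpr fun e => h.ne' (hy e)
      · exact one_ne_zero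
  have hYc : ∀ k : Fin (n+1), Continuous fun z' : ℂ => snocC y z' k := by
    intro k
    by_cases hk : k = Fin.last n
    · subst hk; simp only [snocC_last]; exact continuous_id
    · obtain ⟨k0, rfl⟩ := Fin.exists_castSucc_eq.mpr hk
      simp only [snocC_castSucc]; exact continuous_const
  have hDyc : Continuous fun z' : ℂ =>
      ∏ i : Fin (n+1), ∏ j : Fin (n+1), if i < j then snocC y z' j - snocC y z' i else 1 := by
    refine continuous_finset_prod _ fun i _ => continuous_finset_prod _ fun j _ => ?_
    by_cases h : i < j
    · simp only [if_pos h]; exact (hYc j).sub (hYc i)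
    · simp only [if_neg h]; exact continuous_const
  have hD0 : ((∏ i : Fin (n+1), ∏ j, if i < j then snocC x z i - snocC x z j else 1) *
      ∏ i : Fin (n+1), ∏ j, if i < j then snocC y z j - snocC y z i else 1) ≠ 0 := by
    rw [Dx_split, Dy_split]
    exact mul_ne_zero (mul_ne_zero hDxn hBx) (mul_ne_zero hDyn hBy)
  have hent : ∀ i j, ContinuousAt (fun z' => resM3 q z x y z' i j) z := by
    intro i j
    by_cases hj : j = Fin.last n
    · subst hj
      by_cases hi : i = Fin.last n
      · subst hi
        simp only [resM3, Matrix.of_apply, if_pos rfl]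
        exact (continuous_const.mul (continuous_finset_prod _ fun k _ =>
          continuous_const.sub (continuous_const.mul continuous_id))).continuousAt
      · simp only [resM3, Matrix.of_apply, if_pos rfl, if_neg hi]
        have hXi : snocC x z i - z ≠ 0 := by
          obtain ⟨i0, rfl⟩ := Fin.exists_castSucc_eq.mpr hi
          simpa using sub_ne_zero.mpr fun e => hzx i0 e.symm
        exact ContinuousAt.div
          ((((continuous_const.sub continuous_id).mul continuous_const).mul
            (continuous_finset_prod _ fun k _ =>
              continuous_const.sub (continuous_const.mul continuous_id))).continuousAt)
          ((continuous_const.sub continuous_id).continuousAt) hXi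
    · simp only [resM3, Matrix.of_apply, if_neg hj]
      exact continuousAt_const
  have hdetc : ContinuousAt (fun z' => (resM3 q z x y z').det) z := by
    simp only [Matrix.det_apply']
    exact tendsto_finset_sum _ fun σ _ =>
      tendsto_const_nhds.mul (tendsto_finset_prod _ fun i _ => hent (σ i) i)
  have : ContinuousAt (fun z' => -((∏ i, snocC x z i) *
      ((∏ i : Fin (n+1), ∏ j : Fin n, (q * snocC x z i - q⁻¹ * y j)) /
        ((∏ i, ∏ j, if i < j then snocC x z i - snocC x z j else 1) *
          (∏ i, ∏ j, if i < j then snocC y z' j - snocC y z' i else 1))) *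
      (resM3 q z x y z').det)) z := by
    exact (((continuousAt_const.mul
      (ContinuousAt.div continuousAt_const
        (continuousAt_const.mul hDyc.continuousAt) hD0)).mul hdetc)).neg
  exact this


open Filter in
/-- the residue of `K_{n+1}^{(l)}({x̄,z}|{ȳ,z'})` at `z' = z`, as a function
of `z'`, equals `-z(q-q⁻¹)·f(z,ȳ)·f(x̄,z)·K_n^{(l)}(x̄|ȳ)`. -/
theorem izergin_residue {n : ℕ} (q z : ℂ) (x y : Fin n → ℂ)
    (hq : q ≠ 0) (hq2 : q ^ 2 ≠ 1)
    (hx : Function.Injective x) (hy : Function.Injective y)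
    (hxy : ∀ i j, x i ≠ y j) (hzx : ∀ i, z ≠ x i) (hzy : ∀ i, z ≠ y i) :
    Tendsto (fun z' : ℂ => (z' - z) * Kl q (Fin.snoc x z) (Fin.snoc y z'))
      (nhdsWithin z {z}ᶜ)
      (nhds (-(z * (q - q⁻¹)) * fS q (fun _ : Fin 1 => z) y *
        fS q x (fun _ : Fin 1 => z) * Kl q x y)) := by
  rcases eq_or_ne z 0 with rfl | hz
  · have hK0 : ∀ z' : ℂ, Kl q (Fin.snoc x 0) (Fin.snoc y z') = 0 := by
      intro z'
      have : (∏ i : Fin (n+1), Fin.snoc x (0:ℂ) i) = 0 :=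
        Finset.prod_eq_zero (Finset.mem_univ (Fin.last n)) (by simp)
      simp [Kl, this]
    have h1 : (fun z' : ℂ => (z' - 0) * Kl q (Fin.snoc x 0) (Fin.snoc y z')) =
        fun _ => (0 : ℂ) := funext fun z' => by rw [hK0 z', mul_zero]
    have h2 : -((0:ℂ) * (q - q⁻¹)) * fS q (fun _ : Fin 1 => (0:ℂ)) y *
        fS q x (fun _ : Fin 1 => (0:ℂ)) * Kl q x y = 0 := by
      simp
    rw [h1, h2]
    exact tendsto_const_nhds
  · have hq' : q - q⁻¹ ≠ 0 := sub_ne_zero.mpr fun h => hq2 (by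
      rw [sq]; nth_rewrite 1 [h]; exact inv_mul_cancel₀ hq)
    have e1 : ∀ᶠ z' in nhdsWithin z {z}ᶜ, z' ≠ z := by
      filter_upwards [self_mem_nhdsWithin] with a ha using ha
    have e2 : ∀ᶠ z' in nhdsWithin z {z}ᶜ, q * z - q⁻¹ * z' ≠ 0 := by
      have hcont : ContinuousAt (fun z' : ℂ => q * z - q⁻¹ * z') z := by fun_prop
      have hne : q * z - q⁻¹ * z ≠ 0 := by
        have h : q * z - q⁻¹ * z = (q - q⁻¹) * z := by ring
        rw [h]; exact mul_ne_zero hq' hz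
      exact (hcont.eventually_ne hne).filter_mono nhdsWithin_le_nhds
    have e3 : ∀ᶠ z' in nhdsWithin z {z}ᶜ, ∀ i, q * x i - q⁻¹ * z' ≠ 0 := by
      rw [Filter.eventually_all]
      intro i
      by_cases hxi : q * x i - q⁻¹ * z = 0
      · filter_upwards [e1] with a ha
        have hz' : z - a ≠ 0 := sub_ne_zero.mpr fun h => ha h.symm
        rw [sub_eq_zero.mp hxi]
        have h : q⁻¹ * z - q⁻¹ * a = q⁻¹ * (z - a) := by ring
        rw [h]
        exact mul_ne_zero (inv_ne_zero hq) hz'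
      · have hcont : ContinuousAt (fun z' : ℂ => q * x i - q⁻¹ * z') z := by fun_prop
        exact (hcont.eventually_ne hxi).filter_mono nhdsWithin_le_nhds
    have hF : ∀ᶠ z' in nhdsWithin z {z}ᶜ, resG q z x y z' =
        (z' - z) * Kl q (Fin.snoc x z) (Fin.snoc y z') := by
      filter_upwards [e1, e2, e3] with a h1 h2 h3 using resG_eq q z x y a h1 h2 h3
    have hG : ContinuousAt (resG q z x y) z := resG_cont q z x y hx hy hzx hzy
    have hGz : resG q z x y z = -(z * (q - q⁻¹)) * fS q (fun _ : Fin 1 => z) y *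
        fS q x (fun _ : Fin 1 => z) * Kl q x y := resG_at q z x y hx hy hzx hzy
    have hT : Tendsto (resG q z x y) (nhdsWithin z {z}ᶜ)
        (nhds (-(z * (q - q⁻¹)) * fS q (fun _ : Fin 1 => z) y *
          fS q x (fun _ : Fin 1 => z) * Kl q x y)) := by
      rw [← hGz]
      exact hG.tendsto.mono_left nhdsWithin_le_nhds
    exact hT.congr' hF
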